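/- Let 0 < α < β ≤ 1. Then the function φ : ℝ → ℝ defined by φ(t) = 1 − (α/β)·A_β(e^{2t}, 1)/A_α(e^{2t}, 1) for t ≠ 0 and φ(0) = (β − α)/β is positive definite. (Explicitly, φ(t) = sinh((β − α)t)/(cosh(αt)·sinh(βt)) for t ≠ 0.) -/

import Mathlib

open scoped ComplexOrder

/-- Logarithmic mean. -/
noncomputable def LM (x y : ℝ) : ℝ :=
  if x = y then x else (x - y) / (Real.log x - Real.log y)

/-- The mean `A_α`, with `A_0 = LM`. -/
noncomputable def Amean (α x y : ℝ) : ℝ :=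
  if x = y then x else if α = 0 then LM x y
  else α * (x ^ α + y ^ α) * (x - y) / (2 * (x ^ α - y ^ α))

/-- The mean `G_α`, with `G_0 = LM`. -/
noncomputable def Gmean (α x y : ℝ) : ℝ :=
  if x = y then x else if α = 0 then LM x y
  else α * (x * y) ^ (α / 2) * (x - y) / (x ^ α - y ^ α)

/-- The mean `H_α`, with `H_0 = LM`. -/
noncomputable def Hmean (α x y : ℝ) : ℝ :=
  if x = y then x else if α = 0 then LM x y
  else 2 * α * (x * y) ^ α * (x - y) / ((x ^ α + y ^ α) * (x ^ α - y ^ α))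

/-- The power difference mean `M_α`. -/
noncomputable def Mmean (α x y : ℝ) : ℝ :=
  if x = y then x
  else ((α - 1) / α) * (x ^ α - y ^ α) / (x ^ (α - 1) - y ^ (α - 1))

/-- A continuous real function `φ` is positive definite if every matrix
`[φ(tᵢ - tⱼ)]` is positive semidefinite (as a complex matrix). -/
def IsPosDefFun (φ : ℝ → ℝ) : Prop :=
  Continuous φ ∧ ∀ (n : ℕ) (t : Fin n → ℝ),
    Matrix.PosSemidef (Matrix.of fun i j : Fin n => (φ (t i - t j) : ℂ))

open scoped Real

namespace Stmt16
open Matrix Complex Filter Real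

/-- positive-definite kernel property -/
def PDK (f : ℝ → ℝ) : Prop := ∀ (n : ℕ) (t : Fin n → ℝ),
    Matrix.PosSemidef (Matrix.of fun i j : Fin n => (f (t i - t j) : ℂ))

noncomputable def msinc (x : ℝ) : ℝ := if x = 0 then 1 else Real.sinh x / x

lemma psd_of_series {n : ℕ} (M : Matrix (Fin n) (Fin n) ℂ) (ν : ℝ) (hν : 0 ≤ ν)
    (b : ℕ → Fin n → ℂ)
    (hsum : ∀ i j, HasSum (fun k => (ν:ℂ) * (b k i * star (b k j))) (M i j)) :
    M.PosSemidef := by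
  refine Matrix.PosSemidef.of_dotProduct_mulVec_nonneg ?_ ?_
  · -- Hermitian
    ext i j
    rw [Matrix.conjTranspose_apply]
    have h1 := (hsum j i).star
    have h2 : HasSum (fun k => (ν:ℂ) * (b k i * star (b k j))) (star (M j i)) := by
      convert h1 using 2 with k
      simp only [star_mul', star_star, Complex.star_def, Complex.conj_ofReal, Complex.conj_conj]
      ring
    exact h2.unique (hsum i j)
  · intro x
    -- quadratic form
    have hq : HasSum (fun k => ∑ i, ∑ j,
        star (x i) * ((ν:ℂ) * (b k i * star (b k j))) * x j)
        (dotProduct (star x) (M.mulVec x)) := by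
      have : ∀ i : Fin n, HasSum (fun k => ∑ j, star (x i) * ((ν:ℂ) * (b k i * star (b k j))) * x j)
          (star (x i) * (M.mulVec x) i) := by
        intro i
        have : ∀ j : Fin n, HasSum (fun k => star (x i) * ((ν:ℂ) * (b k i * star (b k j))) * x j)
            (star (x i) * (M i j * x j)) := by
          intro j
          have := ((hsum i j).mul_left (star (x i))).mul_right (x j)
          simpa only [mul_assoc] using this
        have h := hasSum_sum (fun j (_ : j ∈ Finset.univ) => this j)
        convert h using 1
        simp [Matrix.mulVec, dotProduct, Finset.mul_sum]
      have h := hasSum_sum (fun i (_ : i ∈ Finset.univ) => this i)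
      simpa [dotProduct] using h
    -- each term is a nonneg real
    have hterm : ∀ k, ∑ i, ∑ j, star (x i) * ((ν:ℂ) * (b k i * star (b k j))) * x j
        = ((ν * Complex.normSq (∑ j, star (b k j) * x j) : ℝ) : ℂ) := by
      intro k
      have : ∑ i, ∑ j, star (x i) * ((ν:ℂ) * (b k i * star (b k j))) * x j
          = (ν:ℂ) * (star (∑ j, star (b k j) * x j) * (∑ j, star (b k j) * x j)) := by
        simp only [Finset.mul_sum, Finset.sum_mul, star_sum, star_mul', star_star]
        rw [Finset.sum_comm]
        refine Finset.sum_congr rfl fun j _ => Finset.sum_congr rfl fun i _ => by ring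
      rw [this, Complex.star_def, ← Complex.normSq_eq_conj_mul_self]
      push_cast
      ring
    have hre : 0 ≤ (dotProduct (star x) (M.mulVec x)).re := by
      have := Complex.hasSum_re hq
      simp only [hterm, Complex.ofReal_re] at this
      rw [← this.tsum_eq]
      exact tsum_nonneg fun k => mul_nonneg hν (Complex.normSq_nonneg _)
    have him : (dotProduct (star x) (M.mulVec x)).im = 0 := by
      have := Complex.hasSum_im hq
      simp only [hterm, Complex.ofReal_im] at this
      exact (this.unique hasSum_zero)
    rw [Complex.nonneg_iff]
    exact ⟨hre, him.symm⟩


lemma psd_smul {n : ℕ} {M : Matrix (Fin n) (Fin n) ℂ} (hM : M.PosSemidef)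
    {r : ℝ} (hr : 0 ≤ r) : ((r:ℂ) • M).PosSemidef := by
  refine Matrix.PosSemidef.of_dotProduct_mulVec_nonneg ?_ ?_
  · ext i j
    simp only [Matrix.conjTranspose_apply, Matrix.smul_apply, star_smul, Complex.star_def,
      Complex.conj_ofReal, smul_eq_mul]
    rw [← hM.1.apply i j]
    simp [Matrix.conjTranspose_apply]
  · intro x
    have h := hM.dotProduct_mulVec_nonneg x
    have : dotProduct (star x) (((r:ℂ) • M).mulVec x)
        = (r:ℂ) * dotProduct (star x) (M.mulVec x) := by
      simp [Matrix.smul_mulVec, dotProduct_smul, smul_eq_mul]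
    rw [this]
    exact mul_nonneg (by exact_mod_cast Complex.zero_le_real.mpr hr) h

lemma pdk_const {r : ℝ} (hr : 0 ≤ r) : PDK (fun _ => r) := by
  intro n t
  refine Matrix.PosSemidef.of_dotProduct_mulVec_nonneg ?_ ?_
  · ext i j
    simp [Matrix.conjTranspose_apply, Complex.star_def, Complex.conj_ofReal]
  · intro x
    have : dotProduct (star x) ((Matrix.of fun _ _ : Fin n => (r:ℂ)).mulVec x)
        = (r:ℂ) * (star (∑ j, x j) * (∑ j, x j)) := by
      simp only [dotProduct, Matrix.mulVec, Matrix.of_apply, Pi.star_apply,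
        star_sum, Finset.mul_sum, Finset.sum_mul]
      rw [Finset.sum_comm]
      refine Finset.sum_congr rfl fun j _ => Finset.sum_congr rfl fun i _ => by ring
    rw [this]
    exact mul_nonneg (by exact_mod_cast Complex.zero_le_real.mpr hr) (star_mul_self_nonneg _)

lemma pdk_add {f g : ℝ → ℝ} (hf : PDK f) (hg : PDK g) : PDK (fun τ => f τ + g τ) := by
  intro n t
  have := (hf n t).add (hg n t)
  convert this using 1
  ext i j
  simp [Matrix.add_apply]

lemma pdk_smul {f : ℝ → ℝ} (hf : PDK f) {r : ℝ} (hr : 0 ≤ r) : PDK (fun τ => r * f τ) := by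
  intro n t
  have := psd_smul (hf n t) hr
  convert this using 1
  ext i j
  simp [Matrix.smul_apply, smul_eq_mul]

/-- Schur product theorem -/
lemma psd_schur {n : ℕ} {A B : Matrix (Fin n) (Fin n) ℂ}
    (hA : A.PosSemidef) (hB : B.PosSemidef) :
    Matrix.PosSemidef (Matrix.of fun i j => A i j * B i j) := by
  obtain ⟨C, rfl⟩ : ∃ C : Matrix (Fin n) (Fin n) ℂ, A = Cᴴ * C := by
    open scoped MatrixOrder in exact CStarAlgebra.nonneg_iff_eq_star_mul_self.mp hA.nonneg
  refine Matrix.PosSemidef.of_dotProduct_mulVec_nonneg ?_ ?_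
  · ext i j
    have hAH : star ((Cᴴ * C) j i) = (Cᴴ * C) i j := by
      rw [← Matrix.conjTranspose_apply, (Matrix.posSemidef_conjTranspose_mul_self C).1]
    have hBH : star (B j i) = B i j := by
      rw [← Matrix.conjTranspose_apply, hB.1]
    simp only [Matrix.conjTranspose_apply, Matrix.of_apply, star_mul']
    rw [hAH, hBH]
  · intro x
    have lhs_eq : dotProduct (star x)
        ((Matrix.of fun i j => (Cᴴ * C) i j * B i j).mulVec x)
        = ∑ i, ∑ j, ∑ k, star (x i) * star (C k i) * C k j * B i j * x j := by
      simp only [dotProduct, Matrix.mulVec, Matrix.of_apply, Matrix.mul_apply,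
        Matrix.conjTranspose_apply, Pi.star_apply, Finset.sum_mul, Finset.mul_sum]
      exact Finset.sum_congr rfl fun i _ => Finset.sum_congr rfl fun j _ =>
        Finset.sum_congr rfl fun k _ => by ring
    have rhs_eq : ∑ k, dotProduct (star fun j => C k j * x j)
            (B.mulVec (fun j => C k j * x j))
        = ∑ k, ∑ i, ∑ j, star (x i) * star (C k i) * C k j * B i j * x j := by
      refine Finset.sum_congr rfl fun k _ => ?_
      simp only [dotProduct, Matrix.mulVec, Pi.star_apply, star_mul', Finset.mul_sum]
      exact Finset.sum_congr rfl fun i _ => Finset.sum_congr rfl fun j _ => by ring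
    have swap : ∑ i, ∑ j, ∑ k, star (x i) * star (C k i) * C k j * B i j * x j
        = ∑ k, ∑ i, ∑ j, star (x i) * star (C k i) * C k j * B i j * x j := by
      calc ∑ i, ∑ j, ∑ k, star (x i) * star (C k i) * C k j * B i j * x j
          = ∑ i, ∑ k, ∑ j, star (x i) * star (C k i) * C k j * B i j * x j :=
            Finset.sum_congr rfl fun i _ => Finset.sum_comm
        _ = ∑ k, ∑ i, ∑ j, star (x i) * star (C k i) * C k j * B i j * x j :=
            Finset.sum_comm
    rw [lhs_eq, swap, ← rhs_eq]
    exact Finset.sum_nonneg fun k _ => hB.dotProduct_mulVec_nonneg _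

lemma pdk_mul {f g : ℝ → ℝ} (hf : PDK f) (hg : PDK g) : PDK (fun τ => f τ * g τ) := by
  intro n t
  have := psd_schur (hf n t) (hg n t)
  convert this using 1
  ext i j
  simp

lemma pdk_prod {m : ℕ} (f : ℕ → ℝ → ℝ) (hf : ∀ k, PDK (f k)) :
    PDK (fun τ => ∏ k ∈ Finset.range m, f k τ) := by
  induction m with
  | zero => simpa using pdk_const (zero_le_one) -- product over empty = 1
  | succ m ih =>
      have := pdk_mul ih (hf m)
      convert this using 2 with τ
      rw [Finset.prod_range_succ]


lemma ne_zero_of_re_pos {ν s : ℝ} (hν : 0 < ν) : ((ν:ℂ) + s * I) ≠ 0 := by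
  intro h
  have := congrArg Complex.re h
  simp at this
  linarith

/-- The half-Cauchy matrix `1/(ν + (tᵢ - tⱼ)I)` is PSD. -/
lemma psd_halfCauchy {ν : ℝ} (hν : 0 < ν) {n : ℕ} (t : Fin n → ℝ) :
    Matrix.PosSemidef (Matrix.of fun i j : Fin n =>
      ((ν:ℂ) + ((t i - t j : ℝ)) * I)⁻¹) := by
  set a : Fin n → ℂ := fun i => ((ν:ℂ) + t i * I)⁻¹ with ha
  set w : Fin n → ℂ := fun i => ((t i : ℂ) * I) * ((ν:ℂ) + t i * I)⁻¹ with hw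
  have hz : ∀ i, ((ν:ℂ) + t i * I) ≠ 0 := fun i => ne_zero_of_re_pos hν
  have habs : ∀ i, ‖(ν:ℂ) + t i * I‖ ^ 2 = ν^2 + t i^2 := by
    intro i
    rw [Complex.sq_norm]
    exact Complex.normSq_add_mul_I ν (t i)
  have hwlt : ∀ i, ‖w i‖ < 1 := by
    intro i
    rw [hw]
    have h1 : ‖(t i : ℂ) * I‖ = |t i| := by
      rw [norm_mul]
      simp [Complex.norm_real]
    have h2 : |t i| < ‖((ν:ℂ) + t i * I)‖ := by
      nlinarith [habs i, norm_nonneg ((ν:ℂ) + t i * I), abs_nonneg (t i),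
        _root_.sq_abs (t i)]
    have hpos : 0 < ‖((ν:ℂ) + t i * I)‖ := lt_of_le_of_lt (abs_nonneg _) h2
    rw [norm_mul, norm_inv, h1, ← div_eq_mul_inv]
    exact (div_lt_one hpos).mpr h2
  apply psd_of_series _ ν hν.le (fun k i => a i * w i ^ k)
  intro i j
  set r : ℂ := w i * star (w j) with hr
  have hrlt : ‖r‖ < 1 := by
    rw [hr, norm_mul, norm_star]
    nlinarith [hwlt i, hwlt j, norm_nonneg (w i), norm_nonneg (w j)]
  have hgeo : HasSum (fun k : ℕ => r ^ k) (1 - r)⁻¹ :=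
    hasSum_geometric_of_norm_lt_one hrlt
  have h := hgeo.mul_left ((ν:ℂ) * (a i * star (a j)))
  have hterm : ∀ k : ℕ, (ν:ℂ) * (a i * star (a j)) * r ^ k
      = (ν:ℂ) * ((a i * w i ^ k) * star (a j * w j ^ k)) := by
    intro k
    simp only [hr, star_mul', star_pow, mul_pow]
    ring
  have hstara : star (a j) = ((ν:ℂ) - t j * I)⁻¹ := by
    rw [ha]
    simp only [star_inv₀, star_add, Complex.star_def, _root_.map_mul, Complex.conj_ofReal,
      Complex.conj_I]
    ring_nf
  have hstarw : star (w j) = (-(t j : ℂ) * I) * ((ν:ℂ) - t j * I)⁻¹ := by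
    rw [hw]
    simp only [star_mul', star_inv₀, star_add, Complex.star_def, _root_.map_mul,
      Complex.conj_ofReal, Complex.conj_I]
    ring_nf
  have hz2 : ((ν:ℂ) - t j * I) ≠ 0 := by
    have := ne_zero_of_re_pos (s := -(t j)) hν
    intro h; apply this
    rw [← h]; push_cast; ring
  have hz3 : ((ν:ℂ) + ((t i - t j : ℝ)) * I) ≠ 0 := ne_zero_of_re_pos hν
  have hνc : (ν:ℂ) ≠ 0 := by exact_mod_cast hν.ne'
  have poly : ((ν:ℂ) + t i * I) * ((ν:ℂ) - t j * I) - ((t i:ℂ) * I) * (-(t j:ℂ) * I)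
      = (ν:ℂ) * ((ν:ℂ) + ((t i - t j : ℝ)) * I) := by
    push_cast
    ring
  have key : (1 - r) = ((ν:ℂ) * ((ν:ℂ) + ((t i - t j : ℝ)) * I))
      * ((((ν:ℂ) + t i * I)⁻¹) * (((ν:ℂ) - t j * I)⁻¹)) := by
    have hwr : w i * star (w j) = (((t i:ℂ) * I) * (-(t j:ℂ) * I))
        * ((((ν:ℂ) + t i * I)⁻¹) * (((ν:ℂ) - t j * I)⁻¹)) := by
      rw [hw, hstarw]; ring
    have hXY : ((ν:ℂ) + t i * I) * ((ν:ℂ) - t j * I)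
        * ((((ν:ℂ) + t i * I)⁻¹) * (((ν:ℂ) - t j * I)⁻¹)) = 1 := by
      rw [mul_mul_mul_comm, mul_inv_cancel₀ (hz i), mul_inv_cancel₀ hz2, one_mul]
    rw [hr, hwr, ← poly, sub_mul, hXY]
  have hval : (ν:ℂ) * (a i * star (a j)) * (1 - r)⁻¹
      = ((ν:ℂ) + ((t i - t j : ℝ)) * I)⁻¹ := by
    rw [key, hstara, ha]
    rw [mul_inv, mul_inv]
    have hz3' : ((ν:ℂ) + ((t i:ℂ) - (t j:ℂ)) * I) ≠ 0 := by push_cast at hz3; exact hz3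
    field_simp
    rw [div_mul_cancel_left₀ (mul_ne_zero (hz i) (by rw [mul_comm I]; exact hz2)), one_div]
  have h2 : HasSum (fun k => (ν:ℂ) * ((a i * w i ^ k) * star (a j * w j ^ k)))
      (Matrix.of (fun i j : Fin n => ((ν:ℂ) + ((t i - t j : ℝ)) * I)⁻¹) i j) := by
    simp only [Matrix.of_apply]
    rw [← hval]
    exact h.congr_fun fun k => (hterm k).symm
  exact h2


lemma pdk_cauchy {ν : ℝ} (hν : 0 < ν) : PDK (fun τ => ν / (ν^2 + τ^2)) := by
  intro n t
  have h1 := psd_halfCauchy hν t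
  have h2 := h1.transpose
  have h3 := psd_smul (h1.add h2) (by norm_num : (0:ℝ) ≤ 1/2)
  convert h3 using 1
  ext i j
  set s : ℝ := t i - t j with hs
  have hp : ((ν:ℂ) + s * I) ≠ 0 := ne_zero_of_re_pos hν
  have hm : ((ν:ℂ) - s * I) ≠ 0 := by
    have := ne_zero_of_re_pos (s := -s) hν
    intro h; apply this; rw [← h]; push_cast; ring
  have hIs : (Matrix.of fun i j : Fin n => ((ν:ℂ) + ((t i - t j : ℝ)) * I)⁻¹)ᵀ i j
      = ((ν:ℂ) - s * I)⁻¹ := by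
    rw [Matrix.transpose_apply, Matrix.of_apply, hs]
    congr 1
    push_cast
    ring
  simp only [Matrix.smul_apply, Matrix.add_apply, Matrix.of_apply, hIs, smul_eq_mul]
  have hden : ((ν:ℂ) + s * I) * ((ν:ℂ) - s * I) = ((ν^2 + s^2 : ℝ) : ℂ) := by
    have : ((ν:ℂ) + s * I) * ((ν:ℂ) - s * I) = (ν:ℂ)^2 - (s:ℂ)^2 * I^2 := by ring
    rw [this, Complex.I_sq]
    push_cast
    ring
  have hdnz : ((ν^2 + s^2 : ℝ) : ℂ) ≠ 0 := by
    rw [Complex.ofReal_ne_zero]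
    positivity
  rw [inv_add_inv hp hm, hden]
  rw [show ((ν:ℂ) + s * I + ((ν:ℂ) - s * I)) = 2 * ν by ring]
  rw [← hs]
  push_cast
  ring

lemma pdk_tendsto {f : ℝ → ℝ} (g : ℕ → ℝ → ℝ) (hg : ∀ N, PDK (g N))
    (hlim : ∀ τ : ℝ, Tendsto (fun N => g N τ) atTop (nhds (f τ))) : PDK f := by
  intro n t
  have hsym : ∀ N (τ : ℝ), g N (-τ) = g N τ := by
    intro N τ
    have h := (hg N 2 ![τ, 0]).1
    have := congrFun (congrFun h 0) 1
    simp only [Matrix.conjTranspose_apply, Matrix.of_apply, Complex.star_def,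
      Complex.conj_ofReal] at this
    have h2 : g N (![τ, 0] 1 - ![τ, 0] 0) = g N (![τ, 0] 0 - ![τ, 0] 1) := by
      exact_mod_cast this
    simpa using h2
  refine Matrix.PosSemidef.of_dotProduct_mulVec_nonneg ?_ ?_
  · ext i j
    rw [Matrix.conjTranspose_apply, Matrix.of_apply, Matrix.of_apply, Complex.star_def,
      Complex.conj_ofReal]
    have h1 : f (t j - t i) = f (t i - t j) := by
      have e1 := hlim (t j - t i)
      have e2 : Tendsto (fun N => g N (t j - t i)) atTop (nhds (f (t i - t j))) := by
        have : (fun N => g N (t j - t i)) = fun N => g N (t i - t j) := by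
          funext N
          rw [show t j - t i = -(t i - t j) by ring, hsym]
        rw [this]
        exact hlim (t i - t j)
      exact tendsto_nhds_unique e1 e2
    exact_mod_cast h1
  · intro x
    set Q : ℕ → ℂ := fun N => dotProduct (star x)
      ((Matrix.of fun i j : Fin n => (g N (t i - t j) : ℂ)).mulVec x) with hQ
    have hQlim : Tendsto Q atTop (nhds (dotProduct (star x)
        ((Matrix.of fun i j : Fin n => (f (t i - t j) : ℂ)).mulVec x))) := by
      simp only [hQ, dotProduct, Matrix.mulVec, Matrix.of_apply]
      apply tendsto_finset_sum
      intro i _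
      apply Tendsto.const_mul
      apply tendsto_finset_sum
      intro j _
      apply Tendsto.mul_const
      exact (Complex.continuous_ofReal.tendsto _).comp (hlim _)
    have hQpos : ∀ N, 0 ≤ Q N := fun N => (hg N n t).dotProduct_mulVec_nonneg x
    rw [Complex.nonneg_iff]
    constructor
    · exact ge_of_tendsto ((Complex.continuous_re.tendsto _).comp hQlim)
        (Eventually.of_forall fun N => (Complex.nonneg_iff.mp (hQpos N)).1)
    · refine tendsto_nhds_unique ?_ ((Complex.continuous_im.tendsto _).comp hQlim)
      have : (fun N => (Q N).im) = fun _ => (0:ℝ) := by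
        funext N
        exact ((Complex.nonneg_iff.mp (hQpos N)).2).symm
      have h0 : (im ∘ Q) = fun _ => (0:ℝ) := this
      rw [h0]
      exact tendsto_const_nhds


lemma msinc_pos (x : ℝ) : 0 < msinc x := by
  unfold msinc
  rcases eq_or_ne x 0 with h | h
  · simp [h]
  · rw [if_neg h]
    rcases lt_or_gt_of_ne h with hx | hx
    · exact div_pos_of_neg_of_neg (by rwa [Real.sinh_neg_iff]) hx
    · exact div_pos (by rwa [Real.sinh_pos_iff]) hx

lemma msinc_ne_zero (x : ℝ) : msinc x ≠ 0 := (msinc_pos x).ne'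

lemma continuous_msinc : Continuous msinc := by
  rw [continuous_iff_continuousAt]
  intro x
  rcases eq_or_ne x 0 with rfl | hx
  · rw [ContinuousAt]
    have h0 : msinc 0 = 1 := by simp [msinc]
    rw [h0, ← nhdsNE_sup_pure (0:ℝ), tendsto_sup]
    constructor
    · have hslope := (Real.hasDerivAt_sinh 0)
      rw [hasDerivAt_iff_tendsto_slope] at hslope
      simp only [Real.cosh_zero] at hslope
      apply hslope.congr'
      filter_upwards [self_mem_nhdsWithin] with y hy
      have hy' : y ≠ 0 := hy
      simp [slope_fun_def, Real.sinh_zero, msinc, hy', div_eq_inv_mul]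
    · have : Tendsto msinc (pure (0:ℝ)) (nhds (msinc 0)) := tendsto_pure_nhds _ _
      rwa [h0] at this
  · have heq : ∀ᶠ y in nhds x, msinc y = Real.sinh y / y := by
      filter_upwards [isOpen_compl_singleton.mem_nhds hx] with y hy
      have hy' : y ≠ 0 := hy
      simp [msinc, hy']
    exact ContinuousAt.congr
      (Real.continuous_sinh.continuousAt.div continuousAt_id hx) (by
        filter_upwards [heq] with y hy using hy.symm)

/-- Euler product for sinh x / x. -/
lemma euler_msinc (x : ℝ) :
    Tendsto (fun N => ∏ k ∈ Finset.range N, (1 + x^2 / (π^2 * (k+1)^2)))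
      atTop (nhds (msinc x)) := by
  rcases eq_or_ne x 0 with rfl | hx
  · have : (fun N => ∏ k ∈ Finset.range N, (1 + (0:ℝ)^2 / (π^2 * (k+1)^2))) = fun _ => 1 := by
      funext N
      simp
    rw [this]
    have : msinc 0 = 1 := by simp [msinc]
    rw [this]
    exact tendsto_const_nhds
  · set z : ℂ := ((x / π : ℝ) : ℂ) * Complex.I with hzdef
    have hπ : (π : ℝ) ≠ 0 := Real.pi_ne_zero
    have hz := Complex.tendsto_euler_sin_prod z
    have h1 : (↑π : ℂ) * z = (x:ℂ) * Complex.I := by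
      rw [hzdef]
      push_cast
      field_simp [Complex.ofReal_ne_zero.mpr hπ]
    have h2 : Complex.sin ((↑π:ℂ) * z) = ((Real.sinh x : ℝ):ℂ) * Complex.I := by
      rw [h1, Complex.sin_mul_I]
      norm_cast
    have h3 : ∀ N : ℕ, (↑π:ℂ) * z * ∏ j ∈ Finset.range N, ((1:ℂ) - z^2 / ((j:ℂ)+1)^2)
        = (x:ℂ) * Complex.I *
          ((∏ k ∈ Finset.range N, (1 + x^2 / (π^2 * ((k:ℝ)+1)^2)) : ℝ) : ℂ) := by
      intro N
      rw [h1]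
      congr 1
      rw [Complex.ofReal_prod]
      refine Finset.prod_congr rfl fun j _ => ?_
      rw [hzdef, mul_pow, Complex.I_sq]
      push_cast
      field_simp
      try ring
    simp only [h3, h2] at hz
    have hxI : ((x:ℂ) * Complex.I) ≠ 0 :=
      mul_ne_zero (Complex.ofReal_ne_zero.mpr hx) Complex.I_ne_zero
    have hz2 : Tendsto (fun N => ((∏ k ∈ Finset.range N,
        (1 + x^2 / (π^2 * ((k:ℝ)+1)^2)) : ℝ) : ℂ)) atTop
        (nhds (((Real.sinh x / x : ℝ) : ℂ))) := by
      have := hz.const_mul ((x:ℂ) * Complex.I)⁻¹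
      have heq : (fun N => ((x:ℂ) * Complex.I)⁻¹ * ((x:ℂ) * Complex.I *
          ((∏ k ∈ Finset.range N, (1 + x^2 / (π^2 * ((k:ℝ)+1)^2)) : ℝ) : ℂ)))
          = fun N => ((∏ k ∈ Finset.range N, (1 + x^2 / (π^2 * ((k:ℝ)+1)^2)) : ℝ) : ℂ) := by
        funext N
        rw [← mul_assoc, inv_mul_cancel₀ hxI, one_mul]
      rw [heq] at this
      have hval : ((x:ℂ) * Complex.I)⁻¹ * (((Real.sinh x : ℝ):ℂ) * Complex.I)
          = ((Real.sinh x / x : ℝ) : ℂ) := by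
        push_cast
        field_simp [Complex.ofReal_ne_zero.mpr hx]
      rwa [hval] at this
    have := (Complex.continuous_re.tendsto _).comp hz2
    simp only [Function.comp_def, Complex.ofReal_re] at this
    have hm : msinc x = Real.sinh x / x := by simp [msinc, hx]
    rwa [hm]



lemma euler_cosh (x : ℝ) :
    Tendsto (fun N => ∏ k ∈ Finset.range N, (1 + x^2 / (π^2 * (2*(k:ℝ)+1)^2 / 4)))
      atTop (nhds (Real.cosh x)) := by
  have hπ : (π:ℝ) ≠ 0 := Real.pi_ne_zero
  set A : ℕ → ℝ := fun N => ∏ k ∈ Finset.range N, (1 + (2*x)^2 / (π^2 * ((k:ℝ)+1)^2)) with hA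
  set B : ℕ → ℝ := fun N => ∏ k ∈ Finset.range N, (1 + x^2 / (π^2 * ((k:ℝ)+1)^2)) with hB
  set C : ℕ → ℝ := fun N => ∏ k ∈ Finset.range N, (1 + x^2 / (π^2 * (2*(k:ℝ)+1)^2 / 4)) with hC
  have key : ∀ N, A (2*N) = B N * C N := by
    intro N
    induction N with
    | zero => simp [hA, hB, hC]
    | succ N ih =>
        have h2 : 2 * (N+1) = (2*N) + 1 + 1 := by ring
        rw [h2]
        simp only [hA, hB, hC, Finset.prod_range_succ] at *
        rw [ih]
        have c1 : ((2*N : ℕ) : ℝ) = 2*(N:ℝ) := by push_cast; ring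
        have c2 : (((2*N : ℕ) + 1 : ℕ) : ℝ) = 2*(N:ℝ)+1 := by push_cast; ring
        rw [c1, c2]
        have hd1 : (2*(N:ℝ)+1) ≠ 0 := by positivity
        have hd2 : (2*(N:ℝ)+1+1) ≠ 0 := by positivity
        have hd3 : ((N:ℝ)+1) ≠ 0 := by positivity
        field_simp
        ring
  have hBpos : ∀ N, 0 < B N := by
    intro N
    refine Finset.prod_pos fun k _ => by positivity
  have htwo : Tendsto (fun N : ℕ => 2*N) atTop atTop :=
    tendsto_atTop_atTop.mpr fun b => ⟨b, fun n hn => by omega⟩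
  have hA2 : Tendsto (fun N => A (2*N)) atTop (nhds (msinc (2*x))) :=
    (euler_msinc (2*x)).comp htwo
  have hCeq : ∀ N, C N = A (2*N) / B N := by
    intro N
    rw [key N, mul_comm, mul_div_assoc, div_self (hBpos N).ne', mul_one]
  have hlim : Tendsto C atTop (nhds (msinc (2*x) / msinc x)) := by
    have := hA2.div (euler_msinc x) (msinc_ne_zero x)
    exact Tendsto.congr (fun N => (hCeq N).symm) this
  have hval : msinc (2*x) / msinc x = Real.cosh x := by
    rcases eq_or_ne x 0 with rfl | hx
    · simp [msinc]
    · have h2x : 2*x ≠ 0 := by simpa using hx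
      simp only [msinc, if_neg hx, if_neg h2x]
      rw [Real.sinh_two_mul]
      field_simp [Real.sinh_ne_zero.mpr hx]
  rwa [hval] at hlim


lemma amean_exp {γ τ : ℝ} (hγ : γ ≠ 0) (hτ : τ ≠ 0) :
    Amean γ (Real.exp (2 * τ)) 1
      = γ * (Real.exp (γ*τ)^2 + 1) * (Real.exp (2*τ) - 1)
        / (2 * (Real.exp (γ*τ)^2 - 1)) := by
  have hx1 : Real.exp (2 * τ) ≠ 1 := by
    rw [Ne, Real.exp_eq_one_iff]
    intro h
    exact hτ (by linarith)
  have hpow : Real.exp (2 * τ) ^ γ = Real.exp (γ*τ)^2 := by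
    rw [← Real.exp_mul, ← Real.exp_nat_mul]
    congr 1
    push_cast
    ring
  unfold Amean
  rw [if_neg hx1, if_neg hγ, Real.one_rpow, hpow]

lemma phi_closed {α β : ℝ} (hα : 0 < α) (hαβ : α < β) {τ : ℝ} (hτ : τ ≠ 0) :
    1 - (α / β) * (Amean β (Real.exp (2 * τ)) 1 / Amean α (Real.exp (2 * τ)) 1)
      = ((β-α)/β) * (msinc ((β-α)*τ) / msinc (β*τ)) * (1 / Real.cosh (α*τ)) := by
  have hb : 0 < β := hα.trans hαβ
  have hc : 0 < β - α := sub_pos.mpr hαβ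
  set u : ℝ := Real.exp (α*τ) with hu
  set v : ℝ := Real.exp (β*τ) with hv
  have hu1 : 0 < u := Real.exp_pos _
  have hv1 : 0 < v := Real.exp_pos _
  have hu0 : u ≠ 0 := hu1.ne'
  have hv0 : v ≠ 0 := hv1.ne'
  have hexp_ne : ∀ {s : ℝ}, s ≠ 0 → Real.exp s ≠ 1 := by
    intro s hs
    rw [Ne, Real.exp_eq_one_iff]
    exact hs
  have hsq : ∀ s : ℝ, Real.exp s ^ 2 = Real.exp (2*s) := by
    intro s
    rw [sq, ← Real.exp_add]
    ring_nf
  have hu2 : u^2 - 1 ≠ 0 := by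
    rw [hu, hsq]
    exact sub_ne_zero.mpr (hexp_ne (by
      exact mul_ne_zero two_ne_zero (mul_ne_zero hα.ne' hτ)))
  have hv2 : v^2 - 1 ≠ 0 := by
    rw [hv, hsq]
    exact sub_ne_zero.mpr (hexp_ne (by
      exact mul_ne_zero two_ne_zero (mul_ne_zero hb.ne' hτ)))
  have hu2p : u^2 + 1 ≠ 0 := by positivity
  have hE : Real.exp (2*τ) - 1 ≠ 0 :=
    sub_ne_zero.mpr (hexp_ne (mul_ne_zero two_ne_zero hτ))
  -- closed forms for sinh and cosh in terms of u, v
  have hevu : Real.exp ((β-α)*τ) = v/u := by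
    rw [show (β-α)*τ = β*τ - α*τ by ring, Real.exp_sub, hu, hv]
  have hsc : Real.sinh ((β-α)*τ) = (v^2-u^2)/(2*u*v) := by
    rw [Real.sinh_eq, Real.exp_neg, hevu]
    field_simp
  have hsb : Real.sinh (β*τ) = (v^2-1)/(2*v) := by
    rw [Real.sinh_eq, Real.exp_neg, ← hv]
    field_simp
  have hca : Real.cosh (α*τ) = (u^2+1)/(2*u) := by
    rw [Real.cosh_eq, Real.exp_neg, ← hu]
    field_simp
  have hcτ : (β-α)*τ ≠ 0 := mul_ne_zero hc.ne' hτ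
  have hbτ : β*τ ≠ 0 := mul_ne_zero hb.ne' hτ
  rw [amean_exp hb.ne' hτ, amean_exp hα.ne' hτ, ← hu, ← hv]
  rw [show msinc ((β-α)*τ) = Real.sinh ((β-α)*τ) / ((β-α)*τ) from if_neg hcτ,
      show msinc (β*τ) = Real.sinh (β*τ) / (β*τ) from if_neg hbτ]
  rw [hsc, hsb, hca]

  field_simp
  ring

end Stmt16

open Filter

/-- For `0 < α < β ≤ 1`, the function `t ↦ 1 - (α/β)·A_β(e^{2t},1)/A_α(e^{2t},1)`
(with value `(β-α)/β` at `t = 0`) is positive definite. -/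
theorem statement16 (α β : ℝ) (hα : 0 < α) (hαβ : α < β) (hβ : β ≤ 1)
    (φ : ℝ → ℝ) (hφ0 : φ 0 = (β - α) / β)
    (hφ : ∀ t : ℝ, t ≠ 0 →
      φ t = 1 - (α / β) * (Amean β (Real.exp (2 * t)) 1 / Amean α (Real.exp (2 * t)) 1)) :
    IsPosDefFun φ := by
  classical
  open Stmt16 in
  have hb : 0 < β := hα.trans hαβ
  have hc : 0 < β - α := sub_pos.mpr hαβ
  set ψ : ℝ → ℝ := fun τ =>
    ((β-α)/β) * (Stmt16.msinc ((β-α)*τ) / Stmt16.msinc (β*τ)) * (1 / Real.cosh (α*τ)) with hψ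
  have hφψ : φ = ψ := by
    funext τ
    rcases eq_or_ne τ 0 with rfl | hτ
    · rw [hφ0, hψ]
      simp [Stmt16.msinc]
    · rw [hφ τ hτ, hψ]
      exact Stmt16.phi_closed hα hαβ hτ
  rw [hφψ]
  constructor
  · -- continuity
    apply Continuous.mul
    · apply Continuous.mul continuous_const
      exact (Stmt16.continuous_msinc.comp (continuous_const.mul continuous_id)).div
        (Stmt16.continuous_msinc.comp (continuous_const.mul continuous_id))
        fun τ => Stmt16.msinc_ne_zero _
    · exact continuous_const.div (Real.continuous_cosh.comp
        (continuous_const.mul continuous_id)) fun τ => (Real.cosh_pos _).ne'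
  · -- PDK
    show Stmt16.PDK ψ
    set c : ℝ := β - α with hcdef
    set μ : ℕ → ℝ := fun k => ((k:ℝ)+1) * π / β with hμ
    set κ : ℕ → ℝ := fun k => (2*(k:ℝ)+1) * π / (2*α) with hκ
    have hμpos : ∀ k, 0 < μ k := fun k => by
      rw [hμ]
      have := Real.pi_pos
      positivity
    have hκpos : ∀ k, 0 < κ k := fun k => by
      rw [hκ]
      have := Real.pi_pos
      positivity
    have hratio : 0 ≤ 1 - c^2/β^2 := by
      rw [sub_nonneg, div_le_one (by positivity)]
      nlinarith
    set F : ℕ → ℝ → ℝ := fun N τ =>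
      ((β-α)/β) *
        (∏ k ∈ Finset.range N, (c^2/β^2 + ((1 - c^2/β^2) * μ k) * (μ k / (μ k^2 + τ^2)))) *
        (∏ k ∈ Finset.range N, (κ k * (κ k / (κ k^2 + τ^2)))) with hF
    have hPDKF : ∀ N, Stmt16.PDK (F N) := by
      intro N
      apply Stmt16.pdk_mul
      · apply Stmt16.pdk_smul _ (by positivity : (0:ℝ) ≤ (β-α)/β)
        apply Stmt16.pdk_prod
        intro k
        apply Stmt16.pdk_add (Stmt16.pdk_const (by positivity))
        exact Stmt16.pdk_smul (Stmt16.pdk_cauchy (hμpos k))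
          (mul_nonneg hratio (hμpos k).le)
      · apply Stmt16.pdk_prod
        intro k
        exact Stmt16.pdk_smul (Stmt16.pdk_cauchy (hκpos k)) (hκpos k).le
    apply Stmt16.pdk_tendsto F hPDKF
    intro τ
    have hπ : (π:ℝ) ≠ 0 := Real.pi_ne_zero
    have hp1 : ∀ N, ∏ k ∈ Finset.range N,
        (c^2/β^2 + ((1 - c^2/β^2) * μ k) * (μ k / (μ k^2 + τ^2)))
        = (∏ k ∈ Finset.range N, (1 + (c*τ)^2 / (π^2 * ((k:ℝ)+1)^2)))
          / (∏ k ∈ Finset.range N, (1 + (β*τ)^2 / (π^2 * ((k:ℝ)+1)^2))) := by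
      intro N
      rw [← Finset.prod_div_distrib]
      refine Finset.prod_congr rfl fun k _ => ?_
      rw [hμ]
      have h1 : ((k:ℝ)+1) ≠ 0 := by positivity
      have h2 : (((k:ℝ)+1)*π/β)^2 + τ^2 ≠ 0 := by
        have := hμpos k
        rw [hμ] at this
        positivity
      have h3 : (1 + (β*τ)^2 / (π^2 * ((k:ℝ)+1)^2)) ≠ 0 := by positivity
      field_simp
      ring
    have hp2 : ∀ N, ∏ k ∈ Finset.range N, (κ k * (κ k / (κ k^2 + τ^2)))
        = (∏ k ∈ Finset.range N, (1 + (α*τ)^2 / (π^2 * (2*(k:ℝ)+1)^2 / 4)))⁻¹ := by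
      intro N
      rw [← Finset.prod_inv_distrib]
      refine Finset.prod_congr rfl fun k _ => ?_
      rw [hκ]
      have h1 : (2*(k:ℝ)+1) ≠ 0 := by positivity
      have h2 : ((2*(k:ℝ)+1)*π/(2*α))^2 + τ^2 ≠ 0 := by
        have := hκpos k
        rw [hκ] at this
        positivity
      have h3 : (1 + (α*τ)^2 / (π^2 * (2*(k:ℝ)+1)^2 / 4)) ≠ 0 := by positivity
      field_simp
      ring
    have hlim1 : Tendsto (fun N => ∏ k ∈ Finset.range N,
        (c^2/β^2 + ((1 - c^2/β^2) * μ k) * (μ k / (μ k^2 + τ^2)))) atTop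
        (nhds (Stmt16.msinc (c*τ) / Stmt16.msinc (β*τ))) := by
      have := (Stmt16.euler_msinc (c*τ)).div (Stmt16.euler_msinc (β*τ))
        (Stmt16.msinc_ne_zero (β*τ))
      exact Tendsto.congr (fun N => (hp1 N).symm) this
    have hlim2 : Tendsto (fun N => ∏ k ∈ Finset.range N,
        (κ k * (κ k / (κ k^2 + τ^2)))) atTop (nhds ((Real.cosh (α*τ))⁻¹)) := by
      have := (Stmt16.euler_cosh (α*τ)).inv₀ (Real.cosh_pos _).ne'
      exact Tendsto.congr (fun N => (hp2 N).symm) this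
    have := ((hlim1.const_mul ((β-α)/β)).mul hlim2)
    have heq : ((β-α)/β) * (Stmt16.msinc (c*τ) / Stmt16.msinc (β*τ)) * (Real.cosh (α*τ))⁻¹
        = ψ τ := by
      rw [hψ, hcdef]
      simp [one_div]
    rw [heq] at this
    exact Tendsto.congr (fun N => by rw [hF]) this
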